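/- For f in the Wiener algebra W(𝔻) (absolutely convergent Taylor coefficients) and ξ ∈ ℂ, the q-translated function τ_q^ξ f(z) = Σ_n a_n (z+qξ)⋯(z+q^nξ) converges and satisfies ‖τ_q^ξ f‖_W ≤ (-|ξ|; q)_∞ ‖f‖_W, where the Wiener norm is the sum of absolute values of Taylor coefficients (as a function of z for fixed ξ). -/

import Mathlib

open Finset

/-- q-Pochhammer symbol `(a;q)_n`. -/
noncomputable def qPoch (a q : ℂ) (n : ℕ) : ℂ :=
  ∏ j ∈ Finset.range n, (1 - a * q ^ j)

/-- Gaussian binomial coefficient. -/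
noncomputable def qbinom (q : ℂ) (n k : ℕ) : ℂ :=
  qPoch q q n / (qPoch q q k * qPoch q q (n - k))

/-- Coefficient of `z^m` in `τ_q^ξ z^n = Σ_{k=0}^n binom_q(n,k) q^{k(k+1)/2} ξ^k z^{n-k}`. -/
noncomputable def tauCoeff (q : ℝ) (ξ : ℂ) (m n : ℕ) : ℂ :=
  if m ≤ n then qbinom (q : ℂ) n (n - m) * (q : ℂ) ^ ((n - m) * (n - m + 1) / 2) * ξ ^ (n - m)
  else 0

/-! Real analogues -/

noncomputable def rpoch (q : ℝ) (n : ℕ) : ℝ :=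
  ∏ j ∈ Finset.range n, (1 - q * q ^ j)

noncomputable def rbinom (q : ℝ) (n k : ℕ) : ℝ :=
  rpoch q n / (rpoch q k * rpoch q (n - k))

noncomputable def rcoef (q : ℝ) (n k : ℕ) : ℝ :=
  rbinom q n k * q ^ (k * (k + 1) / 2)

lemma rpoch_pos {q : ℝ} (hq0 : 0 < q) (hq1 : q < 1) (n : ℕ) : 0 < rpoch q n := by
  apply Finset.prod_pos
  intro j _
  have h1 : q ^ j ≤ 1 := pow_le_one₀ hq0.le hq1.le
  have : q * q ^ j ≤ q * 1 := by
    apply mul_le_mul_of_nonneg_left h1 hq0.le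
  nlinarith

lemma rpoch_ne {q : ℝ} (hq0 : 0 < q) (hq1 : q < 1) (n : ℕ) : rpoch q n ≠ 0 :=
  (rpoch_pos hq0 hq1 n).ne'

lemma rpoch_succ (q : ℝ) (n : ℕ) : rpoch q (n + 1) = rpoch q n * (1 - q * q ^ n) := by
  simp [rpoch, Finset.prod_range_succ]

lemma rbinom_pos {q : ℝ} (hq0 : 0 < q) (hq1 : q < 1) (n k : ℕ) : 0 < rbinom q n k :=
  div_pos (rpoch_pos hq0 hq1 n) (mul_pos (rpoch_pos hq0 hq1 k) (rpoch_pos hq0 hq1 (n - k)))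

lemma rbinom_zero {q : ℝ} (hq0 : 0 < q) (hq1 : q < 1) (n : ℕ) : rbinom q n 0 = 1 := by
  simp only [rbinom, Nat.sub_zero, rpoch]
  simp only [Finset.range_zero, Finset.prod_empty, one_mul]
  exact div_self (rpoch_ne hq0 hq1 n)

lemma rbinom_self {q : ℝ} (hq0 : 0 < q) (hq1 : q < 1) (n : ℕ) : rbinom q n n = 1 := by
  simp only [rbinom, Nat.sub_self, rpoch]
  simp only [Finset.range_zero, Finset.prod_empty, mul_one]
  exact div_self (rpoch_ne hq0 hq1 n)

/-- `1 - q^{m+1} ≠ 0`. -/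
lemma one_sub_ne {q : ℝ} (hq0 : 0 < q) (hq1 : q < 1) (m : ℕ) : (1 : ℝ) - q * q ^ m ≠ 0 := by
  have := rpoch_pos hq0 hq1 (m + 1)
  rw [rpoch_succ] at this
  intro h
  rw [h, mul_zero] at this
  exact lt_irrefl 0 this

/-- Triangle number step. -/
lemma tri_step (k : ℕ) : (k + 1) * (k + 1 + 1) / 2 = k * (k + 1) / 2 + (k + 1) := by
  obtain ⟨c, hc⟩ := (Nat.even_mul_succ_self k).two_dvd
  have h3 : (k + 1) * (k + 1 + 1) = k * (k + 1) + 2 * (k + 1) := by ring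
  omega

/-- q-Pascal rule. -/
lemma rbinom_pascal {q : ℝ} (hq0 : 0 < q) (hq1 : q < 1) {n k : ℕ} (hk1 : 1 ≤ k) (hkn : k ≤ n) :
    rbinom q (n + 1) k = rbinom q n k + q ^ (n + 1 - k) * rbinom q n (k - 1) := by
  obtain ⟨k, rfl⟩ : ∃ k', k = k' + 1 := ⟨k - 1, by omega⟩
  obtain ⟨d, rfl⟩ : ∃ d, n = k + 1 + d := ⟨n - (k + 1), by omega⟩
  simp only [rbinom]
  have h1 : k + 1 + d + 1 - (k + 1) = d + 1 := by omega
  have h2 : k + 1 + d - (k + 1) = d := by omega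
  have h3 : k + 1 - 1 = k := by omega
  have h4 : k + 1 + d - k = d + 1 := by omega
  rw [h1, h2, h3, h4]
  rw [show k + 1 + d + 1 = (k + 1 + d) + 1 from rfl, rpoch_succ, rpoch_succ, rpoch_succ]
  have hA := rpoch_ne hq0 hq1 (k + 1 + d)
  have hB := rpoch_ne hq0 hq1 k
  have hC := rpoch_ne hq0 hq1 d
  have hk' := one_sub_ne hq0 hq1 k
  have hd' := one_sub_ne hq0 hq1 d
  have hn' := one_sub_ne hq0 hq1 (k + 1 + d)
  field_simp
  ring

lemma rcoef_pos {q : ℝ} (hq0 : 0 < q) (hq1 : q < 1) (n k : ℕ) : 0 < rcoef q n k :=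
  mul_pos (rbinom_pos hq0 hq1 n k) (pow_pos hq0 _)

/-- Gauss's q-binomial theorem (shifted form). -/
lemma gauss_sum {q : ℝ} (hq0 : 0 < q) (hq1 : q < 1) (x : ℝ) (n : ℕ) :
    ∑ k ∈ Finset.range (n + 1), rcoef q n k * x ^ k
      = ∏ j ∈ Finset.range n, (1 + x * q ^ (j + 1)) := by
  induction n with
  | zero => simp [rcoef, rbinom_zero hq0 hq1]
  | succ n ih =>
    rw [Finset.prod_range_succ, ← ih]
    rw [Finset.sum_range_succ' (fun k => rcoef q (n + 1) k * x ^ k) (n + 1)]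
    rw [Finset.sum_range_succ (fun k => rcoef q (n + 1) (k + 1) * x ^ (k + 1)) n]
    have hc0 : ∀ m : ℕ, rcoef q m 0 = 1 := by
      intro m; simp [rcoef, rbinom_zero hq0 hq1]
    have hcs : ∀ m : ℕ, rcoef q m m = q ^ (m * (m + 1) / 2) := by
      intro m; simp [rcoef, rbinom_self hq0 hq1]
    have hpascal : ∀ k : ℕ, k + 1 ≤ n →
        rcoef q (n + 1) (k + 1) = rcoef q n (k + 1) + q ^ (n + 1) * rcoef q n k := by
      intro k hkn
      simp only [rcoef]
      rw [rbinom_pascal hq0 hq1 (by omega) hkn, show k + 1 - 1 = k from by omega, add_mul]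
      congr 1
      have hpow : q ^ (n + 1 - (k + 1)) * q ^ ((k + 1) * (k + 1 + 1) / 2)
          = q ^ (n + 1) * q ^ (k * (k + 1) / 2) := by
        rw [← pow_add, ← pow_add, tri_step k]
        congr 1
        omega
      calc q ^ (n + 1 - (k + 1)) * rbinom q n k * q ^ ((k + 1) * (k + 1 + 1) / 2)
          = rbinom q n k * (q ^ (n + 1 - (k + 1)) * q ^ ((k + 1) * (k + 1 + 1) / 2)) := by ring
        _ = rbinom q n k * (q ^ (n + 1) * q ^ (k * (k + 1) / 2)) := by rw [hpow]
        _ = q ^ (n + 1) * (rbinom q n k * q ^ (k * (k + 1) / 2)) := by ring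
    have hlast : rcoef q (n + 1) (n + 1) = q ^ (n + 1) * rcoef q n n := by
      rw [hcs (n + 1), hcs n, ← pow_add]
      congr 1
      have := tri_step n
      omega
    have expand : ∑ k ∈ Finset.range n, rcoef q (n + 1) (k + 1) * x ^ (k + 1)
        = ∑ k ∈ Finset.range n, (rcoef q n (k + 1) * x ^ (k + 1)
            + q ^ (n + 1) * rcoef q n k * x ^ (k + 1)) := by
      apply Finset.sum_congr rfl
      intro k hk
      rw [hpascal k (Finset.mem_range.mp hk)]
      ring
    rw [expand, Finset.sum_add_distrib]
    have lhs1 : ∑ k ∈ Finset.range n, rcoef q n (k + 1) * x ^ (k + 1) + rcoef q (n+1) 0 * x ^ 0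
        = ∑ k ∈ Finset.range (n + 1), rcoef q n k * x ^ k := by
      rw [Finset.sum_range_succ' (fun k => rcoef q n k * x ^ k) n]
      rw [hc0, hc0]
    have lhs2 : ∑ k ∈ Finset.range n, q ^ (n + 1) * rcoef q n k * x ^ (k + 1)
          + rcoef q (n + 1) (n + 1) * x ^ (n + 1)
        = (∑ k ∈ Finset.range (n + 1), rcoef q n k * x ^ k) * (x * q ^ (n + 1)) := by
      rw [Finset.sum_range_succ (fun k => rcoef q n k * x ^ k) n, add_mul, Finset.sum_mul]
      congr 1
      · apply Finset.sum_congr rfl; intro k _; ring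
      · rw [hlast]; ring
    calc ∑ k ∈ Finset.range n, rcoef q n (k + 1) * x ^ (k + 1)
          + ∑ k ∈ Finset.range n, q ^ (n + 1) * rcoef q n k * x ^ (k + 1)
          + rcoef q (n + 1) (n + 1) * x ^ (n + 1) + rcoef q (n + 1) 0 * x ^ 0
        = (∑ k ∈ Finset.range n, rcoef q n (k + 1) * x ^ (k + 1) + rcoef q (n+1) 0 * x ^ 0)
          + (∑ k ∈ Finset.range n, q ^ (n + 1) * rcoef q n k * x ^ (k + 1)
             + rcoef q (n + 1) (n + 1) * x ^ (n + 1)) := by ring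
      _ = (∑ k ∈ Finset.range (n + 1), rcoef q n k * x ^ k)
          + (∑ k ∈ Finset.range (n + 1), rcoef q n k * x ^ k) * (x * q ^ (n + 1)) := by
            rw [lhs1, lhs2]
      _ = (∑ k ∈ Finset.range (n + 1), rcoef q n k * x ^ k) * (1 + x * q ^ (n + 1)) := by ring

lemma qbinom_eq {q : ℝ} (n k : ℕ) : qbinom (q : ℂ) n k = ((rbinom q n k : ℝ) : ℂ) := by
  rw [qbinom, rbinom]
  push_cast
  congr 1 <;> [skip; congr 1] <;>
  · rw [qPoch, rpoch]
    push_cast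
    rfl

lemma norm_tauCoeff {q : ℝ} (hq0 : 0 < q) (hq1 : q < 1) (ξ : ℂ) {m n : ℕ} (hmn : m ≤ n) :
    ‖tauCoeff q ξ m n‖ = rcoef q n (n - m) * ‖ξ‖ ^ (n - m) := by
  rw [tauCoeff, if_pos hmn, qbinom_eq, rcoef]
  rw [norm_mul, norm_mul, norm_pow, norm_pow]
  rw [Complex.norm_real, Complex.norm_real]
  rw [Real.norm_eq_abs, Real.norm_eq_abs, abs_of_pos (rbinom_pos hq0 hq1 n _),
    abs_of_pos hq0]

set_option maxHeartbeats 1000000 in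
theorem tau_wiener_bound (q : ℝ) (hq0 : 0 < q) (hq1 : q < 1) (ξ : ℂ) (a : ℕ → ℂ)
    (ha : Summable fun n => ‖a n‖) :
    Summable (fun m => ‖∑' n : ℕ, a n * tauCoeff q ξ m n‖) ∧
      ∑' m : ℕ, ‖∑' n : ℕ, a n * tauCoeff q ξ m n‖
        ≤ (∏' j : ℕ, (1 + ‖ξ‖ * q ^ j)) * ∑' n : ℕ, ‖a n‖ := by
  set x := ‖ξ‖ with hx
  have hx0 : 0 ≤ x := norm_nonneg _
  -- multipliability of the infinite product
  have hfac1 : ∀ j : ℕ, (1 : ℝ) ≤ 1 + x * q ^ j := fun j => by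
    have : 0 ≤ x * q ^ j := mul_nonneg hx0 (pow_pos hq0 j).le
    linarith
  have hgeo : Summable fun j : ℕ => x * q ^ j :=
    (summable_geometric_of_lt_one hq0.le hq1).mul_left x
  have hone_le : ∀ u : Finset ℕ, (1 : ℝ) ≤ ∏ j ∈ u, (1 + x * q ^ j) := by
    intro u
    calc (1:ℝ) = ∏ _j ∈ u, (1:ℝ) := Finset.prod_const_one.symm
      _ ≤ ∏ j ∈ u, (1 + x * q ^ j) :=
          Finset.prod_le_prod (fun j _ => zero_le_one) (fun j _ => hfac1 j)
  have hmono : Monotone (fun u : Finset ℕ => ∏ j ∈ u, (1 + x * q ^ j)) := by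
    intro s t hst
    simp only
    rw [← Finset.prod_sdiff hst]
    exact le_mul_of_one_le_left
      (Finset.prod_nonneg fun j _ => le_trans zero_le_one (hfac1 j)) (hone_le _)
  have hbdd : BddAbove (Set.range fun u : Finset ℕ => ∏ j ∈ u, (1 + x * q ^ j)) := by
    refine ⟨Real.exp (∑' j : ℕ, x * q ^ j), ?_⟩
    rintro r ⟨u, rfl⟩
    calc ∏ j ∈ u, (1 + x * q ^ j) ≤ ∏ j ∈ u, Real.exp (x * q ^ j) := by
            apply Finset.prod_le_prod (fun j _ => by positivity)
            intro j _
            have := Real.add_one_le_exp (x * q ^ j)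
            linarith
      _ = Real.exp (∑ j ∈ u, x * q ^ j) := by rw [Real.exp_sum]
      _ ≤ Real.exp (∑' j : ℕ, x * q ^ j) := by
            apply Real.exp_le_exp.mpr
            exact Summable.sum_le_tsum u (fun j _ => mul_nonneg hx0 (pow_pos hq0 j).le) hgeo
  have hprod : HasProd (fun j : ℕ => 1 + x * q ^ j)
      (⨆ u : Finset ℕ, ∏ j ∈ u, (1 + x * q ^ j)) :=
    tendsto_atTop_ciSup hmono hbdd
  have hmul : Multipliable fun j : ℕ => 1 + x * q ^ j := ⟨_, hprod⟩
  have hprodleC : ∀ u : Finset ℕ, ∏ j ∈ u, (1 + x * q ^ j) ≤ ∏' j : ℕ, (1 + x * q ^ j) := by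
    intro u
    rw [hprod.tprod_eq]
    exact le_ciSup hbdd u
  set C := ∏' j : ℕ, (1 + x * q ^ j) with hC
  have hC1 : (1 : ℝ) ≤ C := by
    simpa using hprodleC ∅
  have hC0 : (0 : ℝ) ≤ C := le_trans zero_le_one hC1
  -- partial sums of the coefficients
  set S : ℕ → ℝ := fun n => ∑ k ∈ Finset.range (n + 1), rcoef q n k * x ^ k with hS
  have hSnn : ∀ n, 0 ≤ S n := fun n =>
    Finset.sum_nonneg fun k _ =>
      mul_nonneg (rcoef_pos hq0 hq1 n k).le (pow_nonneg hx0 k)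
  have hSC : ∀ n, S n ≤ C := by
    intro n
    show ∑ k ∈ Finset.range (n + 1), rcoef q n k * x ^ k ≤ C
    rw [gauss_sum hq0 hq1 x n]
    calc ∏ j ∈ Finset.range n, (1 + x * q ^ (j + 1))
        ≤ (∏ j ∈ Finset.range n, (1 + x * q ^ (j + 1))) * (1 + x * q ^ 0) := by
          apply le_mul_of_one_le_right _ (hfac1 0)
          exact Finset.prod_nonneg fun j _ => le_trans zero_le_one (hfac1 (j + 1))
      _ = ∏ j ∈ Finset.range (n + 1), (1 + x * q ^ j) := (Finset.prod_range_succ' (fun j => 1 + x * q ^ j) n).symm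
      _ ≤ C := hprodleC _
  -- finite sum of coefficient norms for fixed n
  have hTsum : ∀ n : ℕ, HasSum (fun m => ‖tauCoeff q ξ m n‖) (S n) := by
    intro n
    have hzero : ∀ m ∉ Finset.range (n + 1), ‖tauCoeff q ξ m n‖ = 0 := by
      intro m hm
      rw [Finset.mem_range, not_lt] at hm
      rw [tauCoeff, if_neg (by omega), norm_zero]
    have := hasSum_sum_of_ne_finset_zero (L := SummationFilter.unconditional ℕ) (s := Finset.range (n+1))
      (f := fun m => ‖tauCoeff q ξ m n‖) hzero
    convert this using 1
    rw [hS]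
    rw [← Finset.sum_range_reflect (fun m => ‖tauCoeff q ξ m n‖) (n + 1)]
    apply Finset.sum_congr rfl
    intro k hk
    rw [Finset.mem_range] at hk
    rw [norm_tauCoeff hq0 hq1 ξ (show n + 1 - 1 - k ≤ n by omega)]
    congr 2 <;> omega
  -- double summability
  set G : ℕ × ℕ → ℝ := fun p => ‖a p.1‖ * ‖tauCoeff q ξ p.2 p.1‖ with hG
  have hGnn : 0 ≤ G := fun p => mul_nonneg (norm_nonneg _) (norm_nonneg _)
  have hGrow : ∀ n, HasSum (fun m => G (n, m)) (‖a n‖ * S n) := by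
    intro n
    exact (hTsum n).mul_left _
  have hGsum : Summable G := by
    rw [summable_prod_of_nonneg hGnn]
    constructor
    · intro n; exact (hGrow n).summable
    · apply Summable.of_nonneg_of_le (fun n => ?_) (fun n => ?_) (ha.mul_right C)
      · rw [(hGrow n).tsum_eq]; exact mul_nonneg (norm_nonneg _) (hSnn n)
      · rw [(hGrow n).tsum_eq]
        exact mul_le_mul_of_nonneg_left (hSC n) (norm_nonneg _)
  -- for each m, inner series summable
  have hinner : ∀ m : ℕ, Summable fun n => a n * tauCoeff q ξ m n := by
    intro m
    apply Summable.of_norm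
    have : Summable fun n => G (n, m) :=
      hGsum.comp_injective (fun n₁ n₂ h => (Prod.ext_iff.mp h).1)
    apply this.congr
    intro n
    rw [hG, norm_mul]
  have hbound : ∀ m : ℕ, ‖∑' n : ℕ, a n * tauCoeff q ξ m n‖ ≤ ∑' n : ℕ, G (n, m) := by
    intro m
    calc ‖∑' n : ℕ, a n * tauCoeff q ξ m n‖ ≤ ∑' n : ℕ, ‖a n * tauCoeff q ξ m n‖ :=
          norm_tsum_le_tsum_norm ((hinner m).norm)
      _ = ∑' n : ℕ, G (n, m) := by
          apply tsum_congr; intro n; rw [hG, norm_mul]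
  have hcolsum : Summable fun m => ∑' n : ℕ, G (n, m) := by
    have := hGsum.prod_symm.prod
    exact this
  have hsummable : Summable (fun m => ‖∑' n : ℕ, a n * tauCoeff q ξ m n‖) :=
    Summable.of_nonneg_of_le (fun m => norm_nonneg _) hbound hcolsum
  refine ⟨hsummable, ?_⟩
  calc ∑' m : ℕ, ‖∑' n : ℕ, a n * tauCoeff q ξ m n‖
      ≤ ∑' m : ℕ, ∑' n : ℕ, G (n, m) := Summable.tsum_le_tsum hbound hsummable hcolsum
    _ = ∑' n : ℕ, ∑' m : ℕ, G (n, m) := by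
        refine Summable.tsum_comm' (f := fun n m : ℕ => G (n, m)) ?_ ?_ ?_
        · exact hGsum.congr fun p => rfl
        · exact fun n => hGsum.prod_factor n
        · exact fun m => (hGsum.prod_symm.prod_factor m).congr fun n => rfl
    _ = ∑' n : ℕ, ‖a n‖ * S n := by
        apply tsum_congr; intro n; exact (hGrow n).tsum_eq
    _ ≤ ∑' n : ℕ, ‖a n‖ * C := by
        apply Summable.tsum_le_tsum (fun n => mul_le_mul_of_nonneg_left (hSC n) (norm_nonneg _))
        · apply Summable.of_nonneg_of_le (fun n => mul_nonneg (norm_nonneg _) (hSnn n))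
            (fun n => mul_le_mul_of_nonneg_left (hSC n) (norm_nonneg _)) (ha.mul_right C)
        · exact ha.mul_right C
    _ = C * ∑' n : ℕ, ‖a n‖ := by rw [tsum_mul_right, mul_comm]
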